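/- (Zhang's theorem, instance optimality of WOMP.) For every weakness parameter κ ∈ (0,1] there exist an integer A ≥ 1 and constants C > 0 and δ* ∈ (0,1) such that the following holds for all n ≥ 1: if D is a normalized dictionary in a Hilbert space H satisfying RIP((A+1)n) with constant δ_{(A+1)n} ≤ δ*, then for any f ∈ H, the WOMP algorithm with parameter κ returns after An steps an approximation f_{An} satisfying ‖f − f_{An}‖ ≤ C σ_n(f), where σ_n(f) = inf_{g ∈ Σ_n} ‖f − g‖. In particular one may take δ* = 1/6, A = 26⌈6κ^{-2}⌉, and C = 8. -/

import Mathlib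

set_option maxHeartbeats 2000000


open scoped RealInnerProductSpace BigOperators

/-- The synthesis operator of a dictionary: `Φ c = ∑ γ c_γ φ_γ`. -/
noncomputable def dictSum {Γ H : Type*} [NormedAddCommGroup H] [InnerProductSpace ℝ H]
    (φ : Γ → H) (c : Γ →₀ ℝ) : H :=
  c.sum fun γ a => a • φ γ

/-- The squared ℓ² norm of a finitely supported sequence. -/
noncomputable def l2normSq {Γ : Type*} (c : Γ →₀ ℝ) : ℝ :=
  ∑ γ ∈ c.support, (c γ) ^ 2

/-- The restricted isometry property of order `m` with constant `δ`. -/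
def RIP {Γ H : Type*} [NormedAddCommGroup H] [InnerProductSpace ℝ H]
    (φ : Γ → H) (m : ℕ) (δ : ℝ) : Prop :=
  ∀ c : Γ →₀ ℝ, c.support.card ≤ m →
    (1 - δ) * l2normSq c ≤ ‖dictSum φ c‖ ^ 2 ∧
    ‖dictSum φ c‖ ^ 2 ≤ (1 + δ) * l2normSq c

/-- The set `Σ_n` of `n`-term linear combinations from the dictionary. -/
def SigmaN {Γ H : Type*} [NormedAddCommGroup H] [InnerProductSpace ℝ H]
    (φ : Γ → H) (n : ℕ) : Set H :=
  {g | ∃ c : Γ →₀ ℝ, c.support.card ≤ n ∧ dictSum φ c = g}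

/-- The error of best `n`-term approximation. -/
noncomputable def bestErr {Γ H : Type*} [NormedAddCommGroup H] [InnerProductSpace ℝ H]
    (φ : Γ → H) (n : ℕ) (f : H) : ℝ :=
  sInf ((fun g => ‖f - g‖) '' SigmaN φ n)

section Aux
variable {Γ H : Type*} [NormedAddCommGroup H] [InnerProductSpace ℝ H]

lemma dictSum_eq_lc (φ : Γ → H) (c : Γ →₀ ℝ) :
    dictSum φ c = Finsupp.linearCombination ℝ φ c :=
  (Finsupp.linearCombination_apply ℝ c).symm

lemma dictSum_sub (φ : Γ → H) (c d : Γ →₀ ℝ) :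
    dictSum φ (c - d) = dictSum φ c - dictSum φ d := by
  simp [dictSum_eq_lc, map_sub]

lemma dictSum_mem_span (φ : Γ → H) (c : Γ →₀ ℝ) (s : Set Γ) (h : ↑c.support ⊆ s) :
    dictSum φ c ∈ Submodule.span ℝ (φ '' s) := by
  rw [dictSum_eq_lc, Finsupp.mem_span_image_iff_linearCombination]
  exact ⟨c, (Finsupp.mem_supported ℝ c).2 h, rfl⟩

lemma exists_repr_of_mem_span (φ : Γ → H) (s : Set Γ) (v : H)
    (hv : v ∈ Submodule.span ℝ (φ '' s)) :
    ∃ b : Γ →₀ ℝ, ↑b.support ⊆ s ∧ dictSum φ b = v := by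
  rw [Finsupp.mem_span_image_iff_linearCombination] at hv
  obtain ⟨l, hl, hlv⟩ := hv
  exact ⟨l, (Finsupp.mem_supported ℝ l).1 hl, by rw [dictSum_eq_lc]; exact hlv⟩

lemma inner_dictSum (φ : Γ → H) (x : H) (c : Γ →₀ ℝ) :
    ⟪x, dictSum φ c⟫ = ∑ γ ∈ c.support, (c γ) * ⟪x, φ γ⟫ := by
  rw [dictSum, Finsupp.sum, inner_sum]
  simp [real_inner_smul_right]

lemma l2normSq_nonneg (c : Γ →₀ ℝ) : 0 ≤ l2normSq c :=
  Finset.sum_nonneg fun _ _ => sq_nonneg _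

lemma sum_sq_le_l2normSq (c : Γ →₀ ℝ) (s : Finset Γ) :
    ∑ γ ∈ s, (c γ) ^ 2 ≤ l2normSq c := by
  classical
  have h1 : ∑ γ ∈ s, (c γ) ^ 2 = ∑ γ ∈ s.filter (fun γ => γ ∈ c.support), (c γ) ^ 2 := by
    rw [Finset.sum_filter_of_ne]
    intro γ _ h
    simp only [Finsupp.mem_support_iff]
    intro hc
    exact h (by rw [hc]; ring)
  rw [h1]
  apply Finset.sum_le_sum_of_subset_of_nonneg
  · intro γ hγ; exact (Finset.mem_filter.1 hγ).2
  · intro i _ _; exact sq_nonneg _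

lemma l2normSq_filter (p : Γ → Prop) [DecidablePred p] (c : Γ →₀ ℝ) :
    l2normSq (c.filter p) = ∑ γ ∈ c.support.filter p, (c γ) ^ 2 := by
  rw [l2normSq, Finsupp.support_filter]
  apply Finset.sum_congr rfl
  intro γ hγ
  rw [Finsupp.filter_apply]
  rw [if_pos (Finset.mem_filter.1 hγ).2]

lemma aux_sqle {a b : ℝ} (ha : 0 ≤ a) (hb : 0 ≤ b) (h : a ^ 2 ≤ b ^ 2) : a ≤ b := by
  nlinarith

lemma aux_mass {M l2 nw ρ e : ℝ} (h4 : M ≤ l2) (h3 : (5 / 6) * l2 ≤ nw ^ 2)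
    (h2 : nw ≤ ρ + e) (h7 : 8 * e < ρ) (he : 0 ≤ e) (hnw : 0 ≤ nw) :
    M ≤ (243 / 160) * ρ ^ 2 := by
  nlinarith

lemma aux_projup {ρ e no M : ℝ} (h3 : ρ ≤ e + no) (h4 : no ^ 2 ≤ (7 / 6) * M)
    (h6 : 8 * e < ρ) (h7 : 0 ≤ no) (he : 0 ≤ e) :
    ρ ^ 2 ≤ (32 / 21) * M := by
  nlinarith

end Aux

/-- Zhang's theorem (instance optimality of WOMP), with the explicit constants
`δ* = 1/6`, `A = 26⌈6κ⁻²⌉` and `C = 8`: if the dictionary satisfies RIP((A+1)n)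
with constant `δ ≤ 1/6`, then the WOMP approximation after `An` steps satisfies
`‖f − f_{An}‖ ≤ 8 σ_n(f)`. -/


theorem stmt9_Zhang_instance_optimality
    {Γ H : Type*} [Countable Γ] [DecidableEq Γ]
    [NormedAddCommGroup H] [InnerProductSpace ℝ H] [CompleteSpace H]
    (κ : ℝ) (hκ : 0 < κ) (hκ1 : κ ≤ 1)
    (A : ℕ) (hA : A = 26 * ⌈(6 : ℝ) / κ ^ 2⌉₊)
    (n : ℕ) (hn : 1 ≤ n)
    (φ : Γ → H) (hnorm : ∀ γ, ‖φ γ‖ = 1)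
    (δ : ℝ) (hδ : δ ≤ 1 / 6)
    (hRIP : RIP φ ((A + 1) * n) δ)
    (f : H) (γseq : ℕ → Γ) (fk : ℕ → H)
    (S : ℕ → Finset Γ) (hS : ∀ k, S k = (Finset.range k).image γseq)
    (r : ℕ → H) (hr : ∀ k, r k = f - fk k)
    (hproj_mem : ∀ k, fk k ∈ Submodule.span ℝ (φ '' (S k : Set Γ)))
    (hproj_orth : ∀ k, ∀ v ∈ Submodule.span ℝ (φ '' (S k : Set Γ)), ⟪r k, v⟫ = 0)
    (hselect : ∀ k, ∀ γ' : Γ, κ * |⟪r k, φ γ'⟫| ≤ |⟪r k, φ (γseq k)⟫|) :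
    ‖f - fk (A * n)‖ ≤ 8 * bestErr φ n f := by
  classical
  have key : ∀ c : Γ →₀ ℝ, c.support.card ≤ n →
      ‖f - fk (A * n)‖ ≤ 8 * ‖f - dictSum φ c‖ := by
    intro c hcard
    by_contra hcon
    push_neg at hcon
    set An := A * n with hAn
    set T := c.support with hT
    set g := dictSum φ c with hg
    set ε := ‖f - g‖ with hεdef
    have hε0 : 0 ≤ ε := norm_nonneg _
    -- a linear order on Γ sorting by decreasing |c γ| with an injective tiebreak
    obtain ⟨ι, hι⟩ := Countable.exists_injective_nat Γ
    set keyf : Γ → ℝ ×ₗ ℕ := fun γ => toLex (-|c γ|, ι γ) with hkeyf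
    have hkeyinj : Function.Injective keyf := by
      intro a b h
      have h2 : (-|c a|, ι a) = (-|c b|, ι b) := congrArg ofLex h
      exact hι (congrArg Prod.snd h2)
    letI : LinearOrder Γ := LinearOrder.lift' keyf hkeyinj
    have hle_iff : ∀ a b : Γ, a ≤ b ↔ keyf a ≤ keyf b := fun a b => Iff.rfl
    have hval : ∀ a b : Γ, a ≤ b → (c b) ^ 2 ≤ (c a) ^ 2 := by
      intro a b hab
      have h1 : keyf a ≤ keyf b := (hle_iff a b).1 hab
      have h2 : -|c a| < -|c b| ∨ (-|c a| = -|c b| ∧ ι a ≤ ι b) := by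
        have := Prod.Lex.le_iff.1 h1
        exact this
      have h3 : |c b| ≤ |c a| := by
        rcases h2 with h | h
        · linarith
        · linarith [h.1]
      calc (c b) ^ 2 = |c b| ^ 2 := (sq_abs _).symm
        _ ≤ |c a| ^ 2 := by have := abs_nonneg (c b); nlinarith
        _ = (c a) ^ 2 := sq_abs _
    -- basic facts
    have sqle : ∀ a b : ℝ, 0 ≤ a → 0 ≤ b → a ^ 2 ≤ b ^ 2 → a ≤ b := by
      intro a b ha hb h; nlinarith
    set x : ℕ → ℝ := fun k => ‖r k‖ ^ 2 with hxdef
    have hxnn : ∀ k, 0 ≤ x k := fun k => sq_nonneg _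
    have projmin : ∀ k, ∀ v ∈ Submodule.span ℝ (φ '' (S k : Set Γ)), ‖r k‖ ≤ ‖f - v‖ := by
      intro k v hv
      have h1 : f - v = r k + (fk k - v) := by rw [hr k]; abel
      have h2 : ⟪r k, fk k - v⟫ = 0 := hproj_orth k _ (Submodule.sub_mem _ (hproj_mem k) hv)
      have h3 : ‖f - v‖ ^ 2 = ‖r k‖ ^ 2 + ‖fk k - v‖ ^ 2 := by
        rw [h1, norm_add_sq_real, h2]; ring
      exact sqle _ _ (norm_nonneg _) (norm_nonneg _) (by nlinarith [sq_nonneg ‖fk k - v‖])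
    have hSsub : ∀ k, S k ⊆ S (k + 1) := by
      intro k; rw [hS k, hS (k + 1)]
      exact Finset.image_subset_image (Finset.range_subset_range.2 (Nat.le_succ k))
    have hγmem : ∀ k, γseq k ∈ S (k + 1) := by
      intro k; rw [hS (k + 1)]
      exact Finset.mem_image_of_mem _ (Finset.self_mem_range_succ k)
    have bsl : ∀ k, x (k + 1) ≤ x k - ⟪r k, φ (γseq k)⟫ ^ 2 := by
      intro k
      set t := (⟪r k, φ (γseq k)⟫ : ℝ) with ht
      have hv : fk k + t • φ (γseq k) ∈ Submodule.span ℝ (φ '' (S (k + 1) : Set Γ)) := by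
        apply Submodule.add_mem
        · exact Submodule.span_mono (Set.image_mono (by exact_mod_cast hSsub k)) (hproj_mem k)
        · exact Submodule.smul_mem _ _ (Submodule.subset_span ⟨γseq k, by exact_mod_cast hγmem k, rfl⟩)
      have h1 := projmin (k + 1) _ hv
      have h2 : f - (fk k + t • φ (γseq k)) = r k - t • φ (γseq k) := by rw [hr k]; abel
      have h3 : ‖r k - t • φ (γseq k)‖ ^ 2 = x k - t ^ 2 := by
        rw [norm_sub_sq_real, real_inner_smul_right, norm_smul, hnorm (γseq k)]
        rw [← ht]
        simp only [mul_one, Real.norm_eq_abs]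
        rw [sq_abs]
        ring
      have h4 : ‖r (k + 1)‖ ≤ ‖r k - t • φ (γseq k)‖ := by rw [← h2]; exact h1
      have h5 : x (k + 1) ≤ ‖r k - t • φ (γseq k)‖ ^ 2 := by
        have hx1 : x (k + 1) = ‖r (k + 1)‖ ^ 2 := rfl
        rw [hx1]
        have h6 := norm_nonneg (r (k + 1))
        have h7 := norm_nonneg (r k - t • φ (γseq k))
        nlinarith [h4]
      rw [h3] at h5; exact h5
    have hxsucc : ∀ k, x (k + 1) ≤ x k := by
      intro k; have := bsl k; nlinarith [sq_nonneg (⟪r k, φ (γseq k)⟫ : ℝ)]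
    have hxanti : ∀ j k, j ≤ k → x k ≤ x j := by
      intro j k hjk
      exact antitone_nat_of_succ_le hxsucc hjk
    have hrmono : ∀ j k, j ≤ k → ‖r k‖ ≤ ‖r j‖ := by
      intro j k hjk
      exact sqle _ _ (norm_nonneg _) (norm_nonneg _) (hxanti j k hjk)
    have h8 : ∀ k, k ≤ An → 8 * ε < ‖r k‖ := by
      intro k hk
      have h1 : ‖r An‖ ≤ ‖r k‖ := hrmono k An hk
      have h2 : 8 * ε < ‖f - fk An‖ := hcon
      rw [← hr An] at h2
      linarith
    have hrpos : ∀ k, k ≤ An → 0 < ‖r k‖ := fun k hk => lt_of_le_of_lt (by positivity) (h8 k hk)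
    have hxpos : ∀ k, k ≤ An → 0 < x k := fun k hk => by have := hrpos k hk; positivity
    have orth0 : ∀ k (d : Γ →₀ ℝ), ↑d.support ⊆ (S k : Set Γ) → ⟪r k, dictSum φ d⟫ = 0 :=
      fun k d hd => hproj_orth k _ (dictSum_mem_span φ d _ hd)
    have ripup : ∀ d : Γ →₀ ℝ, d.support.card ≤ (A + 1) * n →
        ‖dictSum φ d‖ ^ 2 ≤ (7 / 6) * l2normSq d := by
      intro d hd
      have h1 := (hRIP d hd).2
      nlinarith [l2normSq_nonneg d]
    have riplo : ∀ d : Γ →₀ ℝ, d.support.card ≤ (A + 1) * n →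
        (5 / 6) * l2normSq d ≤ ‖dictSum φ d‖ ^ 2 := by
      intro d hd
      have h1 := (hRIP d hd).1
      nlinarith [l2normSq_nonneg d]
    have hScard : ∀ k, (S k).card ≤ k := by
      intro k; rw [hS k]
      exact Finset.card_image_le.trans (by simp)
    set U : ℕ → Finset Γ := fun k => T \ S k with hUdef
    set MASS : ℕ → ℝ := fun k => ∑ γ ∈ U k, (c γ) ^ 2 with hMASSdef
    have hMASSnn : ∀ k, 0 ≤ MASS k := fun k => Finset.sum_nonneg fun _ _ => sq_nonneg _
    have hUsub : ∀ k, U (k + 1) ⊆ U k := by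
      intro k
      exact Finset.sdiff_subset_sdiff (le_refl T) (hSsub k)
    have hUsubT : ∀ k, U k ⊆ T := fun k => Finset.sdiff_subset
    have hcpos : ∀ γ ∈ T, 0 < (c γ) ^ 2 := by
      intro γ hγ
      have : c γ ≠ 0 := Finsupp.mem_support_iff.1 hγ
      positivity
    -- mass of uncaptured coefficients is controlled by the residual
    have massle : ∀ k, k ≤ An → MASS k ≤ (243 / 160) * x k := by
      intro k hk
      obtain ⟨b, hbsupp, hbval⟩ := exists_repr_of_mem_span φ _ _ (hproj_mem k)
      set w := c - b with hw
      have hbcard : b.support.card ≤ An := by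
        have h1 : b.support ⊆ S k := by exact_mod_cast hbsupp
        exact (Finset.card_le_card h1).trans ((hScard k).trans hk)
      have hwcard : w.support.card ≤ (A + 1) * n := by
        calc w.support.card ≤ (c.support ∪ b.support).card :=
              Finset.card_le_card Finsupp.support_sub
          _ ≤ c.support.card + b.support.card := Finset.card_union_le _ _
          _ ≤ n + An := Nat.add_le_add hcard hbcard
          _ = (A + 1) * n := by rw [hAn]; ring
      have h1 : dictSum φ w = r k - (f - g) := by
        rw [hw, dictSum_sub, hbval, hr k, hg]; abel
      have h2 : ‖dictSum φ w‖ ≤ ‖r k‖ + ε := by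
        rw [h1, hεdef]; exact norm_sub_le _ _
      have h3 := riplo w hwcard
      have h4 : ∑ γ ∈ U k, (w γ) ^ 2 ≤ l2normSq w := sum_sq_le_l2normSq w (U k)
      have h5 : ∀ γ ∈ U k, w γ = c γ := by
        intro γ hγ
        have hγS : γ ∉ S k := (Finset.mem_sdiff.1 hγ).2
        have hb0 : b γ = 0 := by
          by_contra hb0
          exact hγS (by exact_mod_cast hbsupp (Finsupp.mem_support_iff.2 hb0))
        simp [hw, Finsupp.sub_apply, hb0]
      have h6 : MASS k = ∑ γ ∈ U k, (w γ) ^ 2 :=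
        Finset.sum_congr rfl fun γ hγ => by rw [h5 γ hγ]
      have h7 := h8 k hk
      have hxk : x k = ‖r k‖ ^ 2 := rfl
      rw [hxk]
      rw [h6]
      exact aux_mass h4 h3 h2 h7 hε0 (norm_nonneg _)
    -- the residual is controlled by the uncaptured mass
    have projup : ∀ k, k ≤ An → x k ≤ (32 / 21) * MASS k := by
      intro k hk
      set cin := Finsupp.filter (fun γ => γ ∈ S k) c with hcin
      set cout := Finsupp.filter (fun γ => ¬ γ ∈ S k) c with hcout
      have hsplit : cin + cout = c := Finsupp.filter_pos_add_filter_neg c _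
      have hcoutsupp : cout.support = U k := by
        rw [hcout, Finsupp.support_filter, ← hT]
        simp only [hUdef]
        rw [Finset.sdiff_eq_filter]
      have hinspan : dictSum φ cin ∈ Submodule.span ℝ (φ '' (S k : Set Γ)) := by
        apply dictSum_mem_span
        rw [hcin, Finsupp.support_filter]
        intro γ hγ
        simp only [Finset.coe_filter, Set.mem_setOf_eq] at hγ
        exact_mod_cast hγ.2
      have h1 : ‖r k‖ ≤ ‖f - dictSum φ cin‖ := projmin k _ hinspan
      have h2 : f - dictSum φ cin = (f - g) + dictSum φ cout := by
        have : g = dictSum φ cin + dictSum φ cout := by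
          conv_lhs => rw [hg, ← hsplit]
          rw [dictSum_eq_lc, dictSum_eq_lc, dictSum_eq_lc, map_add]
        rw [this]; abel
      have h3 : ‖r k‖ ≤ ε + ‖dictSum φ cout‖ := by
        rw [h2] at h1
        exact h1.trans ((norm_add_le _ _).trans (by rw [hεdef]))
      have hcoutcard : cout.support.card ≤ (A + 1) * n := by
        rw [hcoutsupp]
        exact ((Finset.card_le_card (hUsubT k)).trans hcard).trans
          (Nat.le_mul_of_pos_left n (Nat.succ_pos A))
      have h4 := ripup cout hcoutcard
      have h5 : l2normSq cout = MASS k := by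
        rw [hcout, l2normSq_filter, ← hT]
        simp only [hMASSdef, hUdef]
        rw [Finset.sdiff_eq_filter]
      rw [h5] at h4
      have h6 := h8 k hk
      have hxk : x k = ‖r k‖ ^ 2 := rfl
      rw [hxk]
      exact aux_projup h3 h4 h6 (norm_nonneg _) hε0
    -- uncaptured set is nonempty
    have hUne : ∀ k, k ≤ An → (U k).Nonempty := by
      intro k hk
      rw [Finset.nonempty_iff_ne_empty]
      intro hemp
      have hsub : ↑T ⊆ (S k : Set Γ) := by
        have : T ⊆ S k := by
          intro γ hγ
          by_contra hγ2
          have : γ ∈ U k := Finset.mem_sdiff.2 ⟨hγ, hγ2⟩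
          rw [hemp] at this
          exact absurd this (Finset.notMem_empty γ)
        exact_mod_cast this
      have h1 : ‖r k‖ ≤ ε := by
        have := projmin k g (by rw [hg]; exact dictSum_mem_span φ c _ hsub)
        rw [← hεdef] at this; exact this
      have := h8 k hk
      linarith
    -- pivot machinery
    set mfun : ℕ → Γ → ℝ := fun k γ => ∑ γ' ∈ (U k).filter (fun γ' => γ < γ'), (c γ') ^ 2 with hmfun
    have hmnn : ∀ k γ, 0 ≤ mfun k γ := fun k γ => Finset.sum_nonneg fun _ _ => sq_nonneg _
    set Ck : ℕ → Finset Γ := fun k => (U k).filter (fun γ => 9 * mfun k γ ≤ x k) with hCk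
    have hCkne : ∀ k, k ≤ An → (Ck k).Nonempty := by
      intro k hk
      obtain ⟨γm, hγm, hmax⟩ := Finset.exists_max_image (U k) id (hUne k hk)
      refine ⟨γm, ?_⟩
      simp only [hCk, Finset.mem_filter]
      refine ⟨hγm, ?_⟩
      have hempty : (U k).filter (fun γ' => γm < γ') = ∅ := by
        apply Finset.filter_false_of_mem
        intro γ' hγ'
        exact not_lt.2 (hmax γ' hγ')
      have hm0 : mfun k γm = 0 := by
        simp only [hmfun]
        rw [hempty, Finset.sum_empty]
      rw [hm0]
      simpa using hxnn k
    obtain ⟨γdef, hγdef⟩ := hUne 0 (Nat.zero_le _)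
    have hpivex : ∀ k, ∃ p : Γ, k ≤ An → p ∈ Ck k ∧ ∀ q ∈ Ck k, p ≤ q := by
      intro k
      by_cases hk : k ≤ An
      · obtain ⟨p, hp1, hp2⟩ := Finset.exists_min_image (Ck k) id (hCkne k hk)
        exact ⟨p, fun _ => ⟨hp1, fun q hq => hp2 q hq⟩⟩
      · exact ⟨γdef, fun h => absurd h hk⟩
    choose piv hpiv using hpivex
    have hpivmem : ∀ k, k ≤ An → piv k ∈ U k ∧ 9 * mfun k (piv k) ≤ x k := by
      intro k hk
      have h1 := (hpiv k hk).1
      simp only [hCk, Finset.mem_filter] at h1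
      exact h1
    have hpivmin : ∀ k, k ≤ An → ∀ q ∈ Ck k, piv k ≤ q := fun k hk => (hpiv k hk).2
    -- the ratchet: deepest pivot so far
    set pbar : ℕ → Γ := fun k => Nat.rec (piv 0) (fun k pk => max pk (piv (k + 1))) k with hpbardef
    have hpbar0 : pbar 0 = piv 0 := rfl
    have hpbarsucc : ∀ k, pbar (k + 1) = max (pbar k) (piv (k + 1)) := fun k => rfl
    have hpbarmono : Monotone pbar :=
      monotone_nat_of_le_succ fun k => by rw [hpbarsucc k]; exact le_max_left _ _
    have hpivle : ∀ j k, j ≤ k → piv j ≤ pbar k := by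
      intro j k hjk
      have h1 : piv j ≤ pbar j := by
        cases j with
        | zero => rw [hpbar0]
        | succ j => rw [hpbarsucc j]; exact le_max_right _ _
      exact h1.trans (hpbarmono hjk)
    have hpbarmem : ∀ k, ∃ j, j ≤ k ∧ pbar k = piv j := by
      intro k
      induction k with
      | zero => exact ⟨0, le_refl 0, hpbar0⟩
      | succ k ih =>
        obtain ⟨j, hj, hje⟩ := ih
        rcases max_cases (pbar k) (piv (k + 1)) with ⟨he, _⟩ | ⟨he, _⟩
        · exact ⟨j, hj.trans (Nat.le_succ k), by rw [hpbarsucc k, he, hje]⟩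
        · exact ⟨k + 1, le_refl _, by rw [hpbarsucc k, he]⟩
    have hpbarT : ∀ k, k ≤ An → pbar k ∈ T := by
      intro k hk
      obtain ⟨j, hj, hje⟩ := hpbarmem k
      rw [hje]
      exact hUsubT j ((hpivmem j (hj.trans hk)).1)
    have habar : ∀ k, k ≤ An → 0 < (c (pbar k)) ^ 2 := fun k hk => hcpos _ (hpbarT k hk)
    -- the sandwich: the residual energy is bounded by the pivot value plus the deeper mass
    have sandwich : ∀ k, k ≤ An → x k ≤ 9 * ((c (piv k)) ^ 2 + mfun k (piv k)) := by
      intro k hk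
      have hπU := (hpivmem k hk).1
      have hnotmem : piv k ∉ (U k).filter (fun γ' => piv k < γ') := by
        intro hmem
        exact absurd (Finset.mem_filter.1 hmem).2 (lt_irrefl _)
      by_cases hF : ((U k).filter (fun γ => γ < piv k)).Nonempty
      · obtain ⟨p, hp1, hp2⟩ := Finset.exists_max_image _ id hF
        have hpU : p ∈ U k := (Finset.mem_filter.1 hp1).1
        have hppiv : p < piv k := (Finset.mem_filter.1 hp1).2
        have hnotC : p ∉ Ck k := by
          intro hmem
          exact absurd (hpivmin k hk p hmem) (not_le.2 hppiv)
        have hcond : ¬ (9 * mfun k p ≤ x k) := by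
          intro hcond
          exact hnotC (by simp only [hCk, Finset.mem_filter]; exact ⟨hpU, hcond⟩)
        have hset : (U k).filter (fun γ' => p < γ') =
            insert (piv k) ((U k).filter (fun γ' => piv k < γ')) := by
          ext γ'
          simp only [Finset.mem_filter, Finset.mem_insert]
          constructor
          · rintro ⟨hγU, hpγ⟩
            rcases lt_trichotomy γ' (piv k) with h | h | h
            · exact absurd hpγ (not_lt.2 (hp2 γ' (Finset.mem_filter.2 ⟨hγU, h⟩)))
            · exact Or.inl h
            · exact Or.inr ⟨hγU, h⟩
          · rintro (rfl | ⟨hγU, hπγ⟩)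
            · exact ⟨hπU, hppiv⟩
            · exact ⟨hγU, hppiv.trans hπγ⟩
        have hmp : mfun k p = (c (piv k)) ^ 2 + mfun k (piv k) := by
          simp only [hmfun]
          rw [hset, Finset.sum_insert hnotmem]
        rw [← hmp]
        exact le_of_lt (by linarith [not_le.1 hcond])
      · have hUk : U k = insert (piv k) ((U k).filter (fun γ' => piv k < γ')) := by
          ext γ'
          simp only [Finset.mem_filter, Finset.mem_insert]
          constructor
          · intro hγU
            rcases lt_trichotomy γ' (piv k) with h | h | h
            · exact absurd ⟨γ', Finset.mem_filter.2 ⟨hγU, h⟩⟩ hF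
            · exact Or.inl h
            · exact Or.inr ⟨hγU, h⟩
          · rintro (rfl | ⟨hγU, _⟩)
            · exact hπU
            · exact hγU
        have hMeq : MASS k = (c (piv k)) ^ 2 + mfun k (piv k) := by
          simp only [hMASSdef, hmfun]
          conv_lhs => rw [hUk]
          rw [Finset.sum_insert hnotmem]
        have h1 := projup k hk
        rw [hMeq] at h1
        have h2 : 0 ≤ (c (piv k)) ^ 2 + mfun k (piv k) := add_nonneg (sq_nonneg _) (hmnn k _)
        linarith
    -- the per-step energy drop, proportional to the square of the pivot value
    have drop : ∀ k, k < An → x (k + 1) ≤ x k - (64 / 625) * κ ^ 2 * (c (piv k)) ^ 2 := by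
      intro k hklt
      have hk : k ≤ An := le_of_lt hklt
      have hπU := (hpivmem k hk).1
      have hπmass := (hpivmem k hk).2
      have hρ := hrpos k hk
      have hxk : x k = ‖r k‖ ^ 2 := rfl
      have h8k := h8 k hk
      have hxkpos := hxpos k hk
      set cS := Finsupp.filter (fun γ => γ ∈ S k) c with hcS
      set cR := Finsupp.filter (fun γ => ¬ γ ∈ S k) c with hcR
      set cL := Finsupp.filter (fun γ => ¬ γ ∈ S k ∧ γ ≤ piv k) c with hcL
      set cH := Finsupp.filter (fun γ => ¬ γ ∈ S k ∧ piv k < γ) c with hcH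
      have hsplit1 : cS + cR = c := Finsupp.filter_pos_add_filter_neg c _
      have hsplit2 : cL + cH = cR := by
        ext γ
        simp only [hcL, hcH, hcR, Finsupp.add_apply, Finsupp.filter_apply]
        by_cases h1 : γ ∈ S k
        · simp [h1]
        · by_cases h2 : γ ≤ piv k
          · simp [h1, h2, not_lt.2 h2]
          · simp [h1, h2, not_le.1 h2]
      have hLsupp : cL.support = (U k).filter (fun γ => γ ≤ piv k) := by
        rw [hcL, Finsupp.support_filter, ← hT]
        simp only [hUdef]
        rw [Finset.sdiff_eq_filter, Finset.filter_filter]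
      have hHsupp : cH.support = (U k).filter (fun γ => piv k < γ) := by
        rw [hcH, Finsupp.support_filter, ← hT]
        simp only [hUdef]
        rw [Finset.sdiff_eq_filter, Finset.filter_filter]
      have hl2H : l2normSq cH = mfun k (piv k) := by
        rw [hcH, l2normSq_filter, ← hT]
        simp only [hmfun, hUdef]
        rw [Finset.sdiff_eq_filter, Finset.filter_filter]
      -- inner product with the full expansion
      have hIf : (⟪r k, f⟫ : ℝ) = x k := by
        have hfr : f = r k + fk k := by rw [hr k]; abel
        rw [hxk]
        conv_lhs => rw [hfr]
        rw [inner_add_right, real_inner_self_eq_norm_sq, hproj_orth k (fk k) (hproj_mem k)]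
        ring
      have hIc : (7 / 8) * x k ≤ ⟪r k, g⟫ := by
        have h2 : (⟪r k, g⟫ : ℝ) = x k - ⟪r k, f - g⟫ := by
          rw [inner_sub_right, hIf]; ring
        have h3 : |(⟪r k, f - g⟫ : ℝ)| ≤ ‖r k‖ * ε := by
          rw [hεdef]; exact abs_real_inner_le_norm _ _
        have h4 : ‖r k‖ * ε ≤ x k / 8 := by rw [hxk]; nlinarith
        have h5 := (abs_le.1 h3).2
        rw [h2]
        linarith
      have hIS : (⟪r k, dictSum φ cS⟫ : ℝ) = 0 := by
        apply orth0
        rw [hcS, Finsupp.support_filter]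
        intro γ hγ
        simp only [Finset.coe_filter, Set.mem_setOf_eq] at hγ
        exact_mod_cast hγ.2
      have hHcard : cH.support.card ≤ (A + 1) * n := by
        rw [hHsupp]
        exact (((Finset.card_le_card (Finset.filter_subset _ _)).trans
          (Finset.card_le_card (hUsubT k))).trans hcard).trans
          (Nat.le_mul_of_pos_left n (Nat.succ_pos A))
      have hIH : |(⟪r k, dictSum φ cH⟫ : ℝ)| ≤ (3 / 8) * x k := by
        have h1 := ripup cH hHcard
        rw [hl2H] at h1
        have h2 : ‖dictSum φ cH‖ ≤ (3 / 8) * ‖r k‖ := by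
          apply aux_sqle (norm_nonneg _) (by positivity)
          rw [mul_pow, ← hxk]
          nlinarith
        calc |(⟪r k, dictSum φ cH⟫ : ℝ)| ≤ ‖r k‖ * ‖dictSum φ cH‖ := abs_real_inner_le_norm _ _
          _ ≤ ‖r k‖ * ((3 / 8) * ‖r k‖) := mul_le_mul_of_nonneg_left h2 (norm_nonneg _)
          _ = (3 / 8) * x k := by rw [hxk]; ring
      have hdec : g = dictSum φ cS + (dictSum φ cL + dictSum φ cH) := by
        conv_lhs => rw [hg, ← hsplit1, ← hsplit2]
        rw [dictSum_eq_lc, map_add, map_add, ← dictSum_eq_lc, ← dictSum_eq_lc, ← dictSum_eq_lc]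
      have hIL : x k / 2 ≤ ⟪r k, dictSum φ cL⟫ := by
        have h1 : (⟪r k, g⟫ : ℝ) = ⟪r k, dictSum φ cL⟫ + ⟪r k, dictSum φ cH⟫ := by
          rw [hdec, inner_add_right, inner_add_right, hIS]; ring
        have h2 := (abs_le.1 hIH).2
        rw [h1] at hIc
        linarith
      -- the maximal correlation over the shallow uncaptured set
      set Λ := (U k).filter (fun γ => γ ≤ piv k) with hΛ
      have hπΛ : piv k ∈ Λ := by rw [hΛ]; exact Finset.mem_filter.2 ⟨hπU, le_refl _⟩
      obtain ⟨γ0, hγ0Λ, hγ0max⟩ := Finset.exists_max_image Λ (fun γ => |(⟪r k, φ γ⟫ : ℝ)|) ⟨piv k, hπΛ⟩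
      set M := |(⟪r k, φ γ0⟫ : ℝ)| with hM
      have hM0 : 0 ≤ M := abs_nonneg _
      set l1 := ∑ γ ∈ Λ, |c γ| with hl1
      have hIL2 : (⟪r k, dictSum φ cL⟫ : ℝ) ≤ l1 * M := by
        rw [inner_dictSum, hLsupp]
        calc ∑ γ ∈ Λ, (cL γ) * ⟪r k, φ γ⟫
            ≤ ∑ γ ∈ Λ, |c γ| * M := by
              apply Finset.sum_le_sum
              intro γ hγ
              have hγ1 : γ ∈ (U k).filter (fun γ' => γ' ≤ piv k) := by rw [hΛ] at hγ; exact hγ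
              have hγ2 := Finset.mem_filter.1 hγ1
              have hγS : ¬ γ ∈ S k := (Finset.mem_sdiff.1 hγ2.1).2
              have hcLγ : cL γ = c γ := by
                rw [hcL, Finsupp.filter_apply, if_pos ⟨hγS, hγ2.2⟩]
              rw [hcLγ]
              calc (c γ) * ⟪r k, φ γ⟫ ≤ |c γ * ⟪r k, φ γ⟫| := le_abs_self _
                _ = |c γ| * |(⟪r k, φ γ⟫ : ℝ)| := abs_mul _ _
                _ ≤ |c γ| * M := mul_le_mul_of_nonneg_left (hγ0max γ hγ) (abs_nonneg _)
          _ = l1 * M := by rw [hl1, ← Finset.sum_mul]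
      have hcπpos : 0 < |c (piv k)| := abs_pos.2 (Finsupp.mem_support_iff.1 (hUsubT k hπU))
      have hl1cpiv : l1 * |c (piv k)| ≤ (243 / 160) * x k := by
        have h1 : ∀ γ ∈ Λ, |c γ| * |c (piv k)| ≤ (c γ) ^ 2 := by
          intro γ hγ
          have hγ1 : γ ∈ (U k).filter (fun γ' => γ' ≤ piv k) := by rw [hΛ] at hγ; exact hγ
          have hle : γ ≤ piv k := (Finset.mem_filter.1 hγ1).2
          have h2 : (c (piv k)) ^ 2 ≤ (c γ) ^ 2 := hval γ (piv k) hle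
          have h3 : |c (piv k)| ≤ |c γ| :=
            aux_sqle (abs_nonneg _) (abs_nonneg _) (by rw [sq_abs, sq_abs]; exact h2)
          calc |c γ| * |c (piv k)| ≤ |c γ| * |c γ| := mul_le_mul_of_nonneg_left h3 (abs_nonneg _)
            _ = (c γ) ^ 2 := by rw [← sq_abs]; ring
        calc l1 * |c (piv k)| = ∑ γ ∈ Λ, |c γ| * |c (piv k)| := by rw [hl1, Finset.sum_mul]
          _ ≤ ∑ γ ∈ Λ, (c γ) ^ 2 := Finset.sum_le_sum h1
          _ ≤ MASS k := by
              have hMk : MASS k = ∑ γ ∈ U k, (c γ) ^ 2 := rfl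
              rw [hMk]
              apply Finset.sum_le_sum_of_subset_of_nonneg
              · rw [hΛ]; exact Finset.filter_subset _ _
              · exact fun _ _ _ => sq_nonneg _
          _ ≤ (243 / 160) * x k := massle k hk
      have hMlb : (8 / 25) * |c (piv k)| ≤ M := by
        have e1 : (x k / 2) * |c (piv k)| ≤ (l1 * M) * |c (piv k)| :=
          mul_le_mul_of_nonneg_right (hIL.trans hIL2) (abs_nonneg _)
        have e2 : M * (l1 * |c (piv k)|) ≤ M * ((243 / 160) * x k) :=
          mul_le_mul_of_nonneg_left hl1cpiv hM0
        nlinarith [hxkpos, hM0, hcπpos]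
      have hsel := hselect k γ0
      have htsel : (8 / 25) * κ * |c (piv k)| ≤ |(⟪r k, φ (γseq k)⟫ : ℝ)| := by
        calc (8 / 25) * κ * |c (piv k)| = κ * ((8 / 25) * |c (piv k)|) := by ring
          _ ≤ κ * M := mul_le_mul_of_nonneg_left hMlb (le_of_lt hκ)
          _ ≤ |(⟪r k, φ (γseq k)⟫ : ℝ)| := hsel
      have hfinal : (64 / 625) * κ ^ 2 * (c (piv k)) ^ 2 ≤ (⟪r k, φ (γseq k)⟫ : ℝ) ^ 2 := by
        have h1 : ((8 / 25) * κ * |c (piv k)|) ^ 2 ≤ |(⟪r k, φ (γseq k)⟫ : ℝ)| ^ 2 :=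
          pow_le_pow_left₀ (by positivity) htsel 2
        rw [sq_abs] at h1
        calc (64 / 625) * κ ^ 2 * (c (piv k)) ^ 2 = ((8 / 25) * κ * |c (piv k)|) ^ 2 := by
              rw [mul_pow, mul_pow, sq_abs]; ring
          _ ≤ _ := h1
      linarith [bsl k]
    -- the potential function
    set D : ℕ → Finset Γ := fun k => (U k).filter (fun γ => pbar k < γ) with hDdef
    set Φ : ℕ → ℝ := fun k =>
      x k / (c (pbar k)) ^ 2 + 9 * ∑ γ ∈ D k, (1 - (c γ) ^ 2 / (c (pbar k)) ^ 2) with hΦdef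
    have hDsummand : ∀ k, k ≤ An → ∀ γ ∈ D k, 0 ≤ 1 - (c γ) ^ 2 / (c (pbar k)) ^ 2 := by
      intro k hk γ hγ
      have hγ1 : γ ∈ (U k).filter (fun γ => pbar k < γ) := by simp only [hDdef] at hγ; exact hγ
      have hγ2 := Finset.mem_filter.1 hγ1
      have hv := hval (pbar k) γ (le_of_lt hγ2.2)
      have hpos := habar k hk
      rw [sub_nonneg, div_le_one hpos]
      exact hv
    have hΦnn : ∀ k, k ≤ An → 0 ≤ Φ k := by
      intro k hk
      have h1 : 0 ≤ x k / (c (pbar k)) ^ 2 := div_nonneg (hxnn k) (le_of_lt (habar k hk))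
      have h2 : 0 ≤ ∑ γ ∈ D k, (1 - (c γ) ^ 2 / (c (pbar k)) ^ 2) :=
        Finset.sum_nonneg (hDsummand k hk)
      have hΦk : Φ k = x k / (c (pbar k)) ^ 2
          + 9 * ∑ γ ∈ D k, (1 - (c γ) ^ 2 / (c (pbar k)) ^ 2) := rfl
      rw [hΦk]; linarith
    -- upper bound for the potential when the ratchet equals the pivot
    have hsand2 : ∀ k, k ≤ An → pbar k = piv k → Φ k ≤ 9 * (1 + ((D k).card : ℝ)) := by
      intro k hk he
      have hpos := habar k hk
      have hmDk : mfun k (piv k) = ∑ γ ∈ D k, (c γ) ^ 2 := by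
        simp only [hmfun, hDdef, he]
      have hs : x k ≤ 9 * ((c (pbar k)) ^ 2 + ∑ γ ∈ D k, (c γ) ^ 2) := by
        have h1 := sandwich k hk
        rw [hmDk] at h1
        rw [he]
        exact h1
      have hΦk : Φ k = x k / (c (pbar k)) ^ 2
          + 9 * ∑ γ ∈ D k, (1 - (c γ) ^ 2 / (c (pbar k)) ^ 2) := rfl
      have hsum : ∑ γ ∈ D k, (1 - (c γ) ^ 2 / (c (pbar k)) ^ 2)
          = ((D k).card : ℝ) - (∑ γ ∈ D k, (c γ) ^ 2) / (c (pbar k)) ^ 2 := by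
        rw [Finset.sum_sub_distrib, Finset.sum_const, nsmul_eq_mul, mul_one, Finset.sum_div]
      have hx2 : x k / (c (pbar k)) ^ 2
          ≤ 9 + 9 * ((∑ γ ∈ D k, (c γ) ^ 2) / (c (pbar k)) ^ 2) := by
        rw [div_le_iff₀ hpos]
        have heq : (9 + 9 * ((∑ γ ∈ D k, (c γ) ^ 2) / (c (pbar k)) ^ 2)) * (c (pbar k)) ^ 2
            = 9 * ((c (pbar k)) ^ 2 + ∑ γ ∈ D k, (c γ) ^ 2) := by
          rw [add_mul, mul_assoc, div_mul_cancel₀ _ (ne_of_gt hpos)]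
          ring
        rw [heq]
        exact hs
      rw [hΦk, hsum]
      linarith [hx2]
    -- Claim A: at a non-advance step the potential drops by a fixed amount
    have claimA : ∀ k, k < An → pbar (k + 1) = pbar k →
        Φ (k + 1) + (64 / 625) * κ ^ 2 ≤ Φ k := by
      intro k hklt he
      have hk : k ≤ An := le_of_lt hklt
      have hpos := habar k hk
      have hdrop := drop k hklt
      have hDsub : D (k + 1) ⊆ D k := by
        simp only [hDdef]
        intro γ hγ
        have hγ2 := Finset.mem_filter.1 hγ
        refine Finset.mem_filter.2 ⟨hUsub k hγ2.1, ?_⟩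
        rw [← he]
        exact hγ2.2
      have hsum : ∑ γ ∈ D (k + 1), (1 - (c γ) ^ 2 / (c (pbar k)) ^ 2)
          ≤ ∑ γ ∈ D k, (1 - (c γ) ^ 2 / (c (pbar k)) ^ 2) :=
        Finset.sum_le_sum_of_subset_of_nonneg hDsub (fun γ hγ _ => hDsummand k hk γ hγ)
      have hpiva : (c (pbar k)) ^ 2 ≤ (c (piv k)) ^ 2 := hval _ _ (hpivle k k (le_refl k))
      have h2 : x (k + 1) + (64 / 625) * κ ^ 2 * (c (pbar k)) ^ 2 ≤ x k := by
        nlinarith [mul_nonneg (mul_nonneg (by norm_num : (0:ℝ) ≤ 64/625) (sq_nonneg κ))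
          (sub_nonneg.2 hpiva)]
      have h3 := (div_le_div_iff_of_pos_right hpos).2 h2
      have h4 : (x (k + 1) + (64 / 625) * κ ^ 2 * (c (pbar k)) ^ 2) / (c (pbar k)) ^ 2
          = x (k + 1) / (c (pbar k)) ^ 2 + (64 / 625) * κ ^ 2 := by
        rw [add_div, mul_div_assoc, div_self (ne_of_gt hpos), mul_one]
      rw [h4] at h3
      have hΦk : Φ k = x k / (c (pbar k)) ^ 2
          + 9 * ∑ γ ∈ D k, (1 - (c γ) ^ 2 / (c (pbar k)) ^ 2) := rfl
      have hΦk1 : Φ (k + 1) = x (k + 1) / (c (pbar (k + 1))) ^ 2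
          + 9 * ∑ γ ∈ D (k + 1), (1 - (c γ) ^ 2 / (c (pbar (k + 1))) ^ 2) := rfl
      rw [hΦk, hΦk1, he]
      linarith [hsum, h3]
    -- Claim B: at an advance step the potential does not increase
    have claimB : ∀ k, k < An → pbar (k + 1) ≠ pbar k → Φ (k + 1) ≤ Φ k := by
      intro k hklt hne
      have hk : k ≤ An := le_of_lt hklt
      have hk1 : k + 1 ≤ An := hklt
      have hpos := habar k hk
      have hadv : pbar (k + 1) = piv (k + 1) ∧ pbar k < piv (k + 1) := by
        rcases max_cases (pbar k) (piv (k + 1)) with ⟨he, _⟩ | ⟨he, hgt⟩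
        · exact absurd (by rw [hpbarsucc k, he]) hne
        · exact ⟨by rw [hpbarsucc k, he], hgt⟩
      obtain ⟨hB1, hB2⟩ := hadv
      have hub : Φ (k + 1) ≤ 9 * (1 + ((D (k + 1)).card : ℝ)) := hsand2 (k + 1) hk1 hB1
      set E := (U (k + 1)).filter (fun γ => pbar k < γ) with hE
      have hED : E ⊆ D k := by
        simp only [hE, hDdef]
        intro γ hγ
        have hγ2 := Finset.mem_filter.1 hγ
        exact Finset.mem_filter.2 ⟨hUsub k hγ2.1, hγ2.2⟩
      have hxE : 9 * ∑ γ ∈ E, (c γ) ^ 2 ≤ x k := by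
        have h1 : ∑ γ ∈ E, (c γ) ^ 2 ≤ mfun k (piv k) := by
          simp only [hmfun, hE]
          apply Finset.sum_le_sum_of_subset_of_nonneg
          · intro γ hγ
            have hγ2 := Finset.mem_filter.1 hγ
            exact Finset.mem_filter.2
              ⟨hUsub k hγ2.1, lt_of_le_of_lt (hpivle k k (le_refl k)) hγ2.2⟩
          · exact fun _ _ _ => sq_nonneg _
        linarith [(hpivmem k hk).2]
      have hElb : 9 * (E.card : ℝ) ≤ Φ k := by
        have h1 : 9 * ((∑ γ ∈ E, (c γ) ^ 2) / (c (pbar k)) ^ 2) ≤ x k / (c (pbar k)) ^ 2 := by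
          have h1a := (div_le_div_iff_of_pos_right hpos).2 hxE
          calc 9 * ((∑ γ ∈ E, (c γ) ^ 2) / (c (pbar k)) ^ 2)
              = (9 * ∑ γ ∈ E, (c γ) ^ 2) / (c (pbar k)) ^ 2 := by ring
            _ ≤ x k / (c (pbar k)) ^ 2 := h1a
        have h2 : ∑ γ ∈ E, (1 - (c γ) ^ 2 / (c (pbar k)) ^ 2)
            ≤ ∑ γ ∈ D k, (1 - (c γ) ^ 2 / (c (pbar k)) ^ 2) :=
          Finset.sum_le_sum_of_subset_of_nonneg hED (fun γ hγ _ => hDsummand k hk γ hγ)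
        have h3 : (E.card : ℝ) = ∑ γ ∈ E, ((c γ) ^ 2 / (c (pbar k)) ^ 2
            + (1 - (c γ) ^ 2 / (c (pbar k)) ^ 2)) := by
          have h4 : ∀ γ ∈ E, (c γ) ^ 2 / (c (pbar k)) ^ 2
              + (1 - (c γ) ^ 2 / (c (pbar k)) ^ 2) = 1 := fun γ _ => by ring
          rw [Finset.sum_congr rfl h4, Finset.sum_const, nsmul_eq_mul, mul_one]
        have h5 : (E.card : ℝ) = ∑ γ ∈ E, (c γ) ^ 2 / (c (pbar k)) ^ 2
            + ∑ γ ∈ E, (1 - (c γ) ^ 2 / (c (pbar k)) ^ 2) := by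
          rw [h3, Finset.sum_add_distrib]
        have hΦk : Φ k = x k / (c (pbar k)) ^ 2
            + 9 * ∑ γ ∈ D k, (1 - (c γ) ^ 2 / (c (pbar k)) ^ 2) := rfl
        rw [hΦk]
        rw [Finset.sum_div] at h1
        linarith [h1, h2, h5]
      have hcardE : (D (k + 1)).card + 1 ≤ E.card := by
        have hπ1U : piv (k + 1) ∈ U (k + 1) := (hpivmem (k + 1) hk1).1
        have hsub : insert (piv (k + 1)) (D (k + 1)) ⊆ E := by
          intro γ hγ
          rcases Finset.mem_insert.1 hγ with rfl | hγ2
          · simp only [hE]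
            exact Finset.mem_filter.2 ⟨hπ1U, hB2⟩
          · have hγ3 : γ ∈ (U (k + 1)).filter (fun γ => pbar (k + 1) < γ) := by
              simp only [hDdef] at hγ2; exact hγ2
            have hγ4 := Finset.mem_filter.1 hγ3
            simp only [hE]
            exact Finset.mem_filter.2 ⟨hγ4.1, lt_trans hB2 (hB1 ▸ hγ4.2)⟩
        have hnm : piv (k + 1) ∉ D (k + 1) := by
          intro hmem
          have hγ3 : piv (k + 1) ∈ (U (k + 1)).filter (fun γ => pbar (k + 1) < γ) := by
            simp only [hDdef] at hmem; exact hmem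
          have hγ4 := Finset.mem_filter.1 hγ3
          rw [hB1] at hγ4
          exact absurd hγ4.2 (lt_irrefl _)
        have h6 := Finset.card_le_card hsub
        rwa [Finset.card_insert_of_notMem hnm] at h6
      have hfin2 : (9 : ℝ) * (1 + ((D (k + 1)).card : ℝ)) ≤ 9 * (E.card : ℝ) := by
        have h7 : ((D (k + 1)).card : ℝ) + 1 ≤ (E.card : ℝ) := by exact_mod_cast hcardE
        linarith
      linarith [hub, hElb, hfin2]
    -- counting advances
    set adv : ℕ → ℕ := fun k => ((Finset.range k).filter (fun j => pbar (j + 1) ≠ pbar j)).card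
      with hadvdef
    have hadvsucc : ∀ k, adv (k + 1) = adv k + (if pbar (k + 1) ≠ pbar k then 1 else 0) := by
      intro k
      simp only [hadvdef, Finset.range_add_one, Finset.filter_insert]
      split_ifs with h
      · rw [Finset.card_insert_of_notMem (by simp)]
      · rw [Nat.add_zero]
    have hind : ∀ k, k ≤ An → Φ k + (64 / 625) * κ ^ 2 * ((k : ℝ) - (adv k : ℝ)) ≤ Φ 0 := by
      intro k
      induction k with
      | zero =>
        intro _
        have h1 : adv 0 = 0 := by simp [hadvdef]
        rw [h1]
        simp
      | succ k ih =>
        intro hk1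
        have hk : k ≤ An := Nat.le_of_succ_le hk1
        have hklt : k < An := hk1
        have ihk := ih hk
        by_cases he : pbar (k + 1) = pbar k
        · have hca := claimA k hklt he
          have hadv2 : adv (k + 1) = adv k := by rw [hadvsucc k]; simp [he]
          rw [hadv2]
          push_cast
          push_cast at ihk
          linarith
        · have hcb := claimB k hklt he
          have hadv2 : adv (k + 1) = adv k + 1 := by rw [hadvsucc k]; simp [he]
          rw [hadv2]
          push_cast
          have hcast : ((k : ℝ) + 1) - ((adv k : ℝ) + 1) = (k : ℝ) - (adv k : ℝ) := by ring
          rw [hcast]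
          push_cast at ihk
          exact le_trans (add_le_add_left hcb _) ihk
    -- the number of advances is at most T.card - 1
    have hT0 : pbar 0 ∈ T := hpbarT 0 (Nat.zero_le An)
    have hadvle : adv An ≤ T.card - 1 := by
      have hmapsto : ∀ j ∈ (Finset.range An).filter (fun j => pbar (j + 1) ≠ pbar j),
          pbar (j + 1) ∈ T.erase (pbar 0) := by
        intro j hj
        have hj2 := Finset.mem_filter.1 hj
        have hjlt : j < An := Finset.mem_range.1 hj2.1
        have hmem : pbar (j + 1) ∈ T := hpbarT (j + 1) hjlt
        have hlt : pbar j < pbar (j + 1) := (hpbarmono (Nat.le_succ j)).lt_of_ne hj2.2.symm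
        have h0 : pbar 0 ≤ pbar j := hpbarmono (Nat.zero_le j)
        exact Finset.mem_erase.2 ⟨ne_of_gt (lt_of_le_of_lt h0 hlt), hmem⟩
      have haux : ∀ a b : ℕ, a < b → b ∈ (Finset.range An).filter (fun j => pbar (j + 1) ≠ pbar j) →
          pbar (a + 1) ≠ pbar (b + 1) := by
        intro a b hab hb
        have hb2 := Finset.mem_filter.1 hb
        have hltb : pbar b < pbar (b + 1) := (hpbarmono (Nat.le_succ b)).lt_of_ne hb2.2.symm
        have h1 : pbar (a + 1) ≤ pbar b := hpbarmono (Nat.succ_le_of_lt hab)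
        exact ne_of_lt (lt_of_le_of_lt h1 hltb)
      have hinjOn : Set.InjOn (fun j => pbar (j + 1))
          ↑((Finset.range An).filter (fun j => pbar (j + 1) ≠ pbar j)) := by
        intro a ha b hb hab
        by_contra hne2
        rcases lt_trichotomy a b with h | h | h
        · exact haux a b h (Finset.mem_coe.1 hb) hab
        · exact hne2 h
        · exact haux b a h (Finset.mem_coe.1 ha) hab.symm
      have hcard2 := Finset.card_le_card_of_injOn _ hmapsto hinjOn
      rw [Finset.card_erase_of_mem hT0] at hcard2
      have hadvAn : adv An = ((Finset.range An).filter (fun j => pbar (j + 1) ≠ pbar j)).card := rfl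
      rw [hadvAn]
      exact hcard2
    -- final numeric contradiction
    have hfin := hind An (le_refl An)
    have hΦAn := hΦnn An (le_refl An)
    have hΦ0 : Φ 0 ≤ 9 * (n : ℝ) := by
      have h1 : Φ 0 ≤ 9 * (1 + ((D 0).card : ℝ)) := hsand2 0 (Nat.zero_le An) hpbar0
      have h2 : (D 0).card ≤ T.card - 1 := by
        have hsub : D 0 ⊆ T.erase (pbar 0) := by
          intro γ hγ
          have hγ1 : γ ∈ (U 0).filter (fun γ => pbar 0 < γ) := by
            simp only [hDdef] at hγ; exact hγ
          have hγ2 := Finset.mem_filter.1 hγ1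
          exact Finset.mem_erase.2 ⟨ne_of_gt hγ2.2, hUsubT 0 hγ2.1⟩
        have h3 := Finset.card_le_card hsub
        rwa [Finset.card_erase_of_mem hT0] at h3
      have hTcard1 : 1 ≤ T.card := Finset.card_pos.2 ⟨pbar 0, hT0⟩
      have h4 : (D 0).card + 1 ≤ n := by omega
      have h5 : ((D 0).card : ℝ) + 1 ≤ (n : ℝ) := by exact_mod_cast h4
      linarith
    have hadvR : (adv An : ℝ) ≤ (n : ℝ) - 1 := by
      have hTn : T.card ≤ n := hcard
      have h1 : adv An ≤ n - 1 := hadvle.trans (Nat.sub_le_sub_right hTn 1)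
      have h2 : (adv An : ℝ) ≤ ((n - 1 : ℕ) : ℝ) := by exact_mod_cast h1
      rwa [Nat.cast_sub hn, Nat.cast_one] at h2
    have hκ2 : (0 : ℝ) < κ ^ 2 := by positivity
    have hn1 : (1 : ℝ) ≤ (n : ℝ) := by exact_mod_cast hn
    have hκ21 : κ ^ 2 ≤ 1 := by nlinarith
    have hAratio : (156 : ℝ) / κ ^ 2 ≤ (A : ℝ) := by
      have h1 : (6 : ℝ) / κ ^ 2 ≤ (⌈(6 : ℝ) / κ ^ 2⌉₊ : ℝ) := Nat.le_ceil _
      have h2 : (A : ℝ) = 26 * (⌈(6 : ℝ) / κ ^ 2⌉₊ : ℝ) := by rw [hA]; push_cast; ring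
      have h3 : (156 : ℝ) / κ ^ 2 = 26 * ((6 : ℝ) / κ ^ 2) := by ring
      rw [h2, h3]
      linarith
    have hAnκ : (156 : ℝ) * (n : ℝ) ≤ κ ^ 2 * (An : ℝ) := by
      have h1 : (An : ℝ) = (A : ℝ) * (n : ℝ) := by rw [hAn]; push_cast; ring
      have h3 : ((156 : ℝ) / κ ^ 2) * (n : ℝ) ≤ (A : ℝ) * (n : ℝ) :=
        mul_le_mul_of_nonneg_right hAratio (by linarith)
      have h4 : κ ^ 2 * (((156 : ℝ) / κ ^ 2) * (n : ℝ)) = 156 * (n : ℝ) := by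
        field_simp
      calc (156 : ℝ) * (n : ℝ) = κ ^ 2 * (((156 : ℝ) / κ ^ 2) * (n : ℝ)) := h4.symm
        _ ≤ κ ^ 2 * ((A : ℝ) * (n : ℝ)) := mul_le_mul_of_nonneg_left h3 (le_of_lt hκ2)
        _ = κ ^ 2 * (An : ℝ) := by rw [h1]
    have hadvκ : κ ^ 2 * (adv An : ℝ) ≤ (n : ℝ) - 1 := by
      have h0 : (0 : ℝ) ≤ (adv An : ℝ) := Nat.cast_nonneg _
      nlinarith
    have e1 : (64 / 625) * κ ^ 2 * ((An : ℝ) - (adv An : ℝ)) ≤ 9 * (n : ℝ) :=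
      le_trans (le_add_of_nonneg_left hΦAn) (le_trans hfin hΦ0)
    have m1 : (64 / 625 : ℝ) * (156 * (n : ℝ)) ≤ 64 / 625 * (κ ^ 2 * (An : ℝ)) :=
      mul_le_mul_of_nonneg_left hAnκ (by norm_num)
    have m2 : (64 / 625 : ℝ) * (κ ^ 2 * (adv An : ℝ)) ≤ 64 / 625 * ((n : ℝ) - 1) :=
      mul_le_mul_of_nonneg_left hadvκ (by norm_num)
    have m3 : (64 / 625 : ℝ) * (κ ^ 2 * (An : ℝ)) - 64 / 625 * (κ ^ 2 * (adv An : ℝ))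
        ≤ 9 * (n : ℝ) := by
      calc (64 / 625 : ℝ) * (κ ^ 2 * (An : ℝ)) - 64 / 625 * (κ ^ 2 * (adv An : ℝ))
          = (64 / 625) * κ ^ 2 * ((An : ℝ) - (adv An : ℝ)) := by ring
        _ ≤ 9 * (n : ℝ) := e1
    have t1 : (64 / 625 : ℝ) * (156 * (n : ℝ)) - 64 / 625 * ((n : ℝ) - 1) ≤ 9 * (n : ℝ) :=
      le_trans (sub_le_sub m1 m2) m3
    nlinarith [t1, hn1]





  -- conclude via the infimum
  have h0mem : (0 : H) ∈ SigmaN φ n := ⟨0, by simp, by simp [dictSum]⟩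
  have hne : ((fun g => ‖f - g‖) '' SigmaN φ n).Nonempty := ⟨‖f - 0‖, ⟨0, h0mem, rfl⟩⟩
  have hlb : ‖f - fk (A * n)‖ / 8 ≤ bestErr φ n f := by
    apply le_csInf hne
    rintro b ⟨g, ⟨c, hc, rfl⟩, rfl⟩
    have := key c hc
    linarith
  linarith
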